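/- Fix δ ∈ ℝ and for k ≥ 0 set ε_k = δ/(2k+1). Define a sequence R_k of positive reals by R_0 = ζ > 0 and R_{k+1} = (1 − ε_k R_k)/(R_k + ε_k), assuming all terms stay positive. Let r = (1+iδ)/2 and define V_k = i·[(−1)^k(P_k − Q_k) − iζ(P_k + Q_k)]/[(−1)^k(P_k + Q_k) − iζ(P_k − Q_k)] where P_k = ((r−k+1)/2)_k and Q_k = ((r−k)/2)_k are Pochhammer symbols. Then R_k = V_k for all k ≥ 0. -/

import Mathlib

open Complex

/-- Closed form for the circle radii `R_k = R_{2k,1}` of the circle pattern of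
`z^{1+iδ}`: the sequence defined by `R_0 = ζ > 0` and
`R_{k+1} = (1 - ε_k R_k)/(R_k + ε_k)`, `ε_k = δ/(2k+1)`, coincides with the
explicit Pochhammer expression `V_k`. -/
theorem radii_closed_form
    (δ : ℝ) (ζ : ℝ) (hζ : 0 < ζ)
    (ε : ℕ → ℝ) (hε : ∀ k, ε k = δ / (2 * k + 1))
    (R : ℕ → ℝ) (hR0 : R 0 = ζ)
    (hRpos : ∀ k, 0 < R k)
    (hRrec : ∀ k, R (k + 1) = (1 - ε k * R k) / (R k + ε k))
    (r : ℂ) (hr : r = (1 + δ * Complex.I) / 2)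
    (P Q V : ℕ → ℂ)
    (hP : ∀ k, P k = (ascPochhammer ℂ k).eval ((r - k + 1) / 2))
    (hQ : ∀ k, Q k = (ascPochhammer ℂ k).eval ((r - k) / 2))
    (hV : ∀ k, V k = Complex.I *
      ((((-1 : ℂ) ^ k) * (P k - Q k) - Complex.I * ζ * (P k + Q k)) /
       ((((-1 : ℂ) ^ k) * (P k + Q k)) - Complex.I * ζ * (P k - Q k)))) :
    ∀ k, (R k : ℂ) = V k := by
  intro k
  induction k with
  | zero =>
      have hP0 : P 0 = 1 := by simp [hP 0]
      have hQ0 : Q 0 = 1 := by simp [hQ 0]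
      rw [hR0, hV 0, hP0, hQ0]
      have h2 : ((1:ℂ) + 1) ≠ 0 := by norm_num
      field_simp
      linear_combination (2*(ζ:ℂ)) * Complex.I_sq
  | succ k ih =>
      -- abbreviations
      set A := P k with hA
      set B := Q k with hB
      set s : ℂ := (-1 : ℂ) ^ k with hs_def
      set e : ℂ := (ε k : ℂ) with he_def
      set N : ℂ := s * (A - B) - Complex.I * ζ * (A + B) with hN
      set D : ℂ := s * (A + B) - Complex.I * ζ * (A - B) with hD
      have hm0 : (2 * (k:ℝ) + 1) ≠ 0 := by positivity
      have hmC : (2 * (k:ℂ) + 1) ≠ 0 := by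
        intro h
        have : ((2 * (k:ℝ) + 1 : ℝ) : ℂ) = 0 := by push_cast; push_cast at h; exact_mod_cast h
        exact hm0 (by exact_mod_cast this)
      -- δ = e * (2k+1)
      have heδ : (δ : ℂ) = e * (2 * (k:ℂ) + 1) := by
        rw [he_def, hε k]
        push_cast
        field_simp
      have hr' : r = (1 + e * (2 * (k:ℂ) + 1) * Complex.I) / 2 := by
        rw [hr, heδ]
      -- Pochhammer recurrences
      have hP1 : P (k + 1) = (r + k) / 2 * B := by
        rw [hP (k+1), hB, hQ k, ascPochhammer_succ_right, Polynomial.eval_mul,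
          Polynomial.eval_add, Polynomial.eval_X, Polynomial.eval_natCast]
        push_cast
        have harg : (r - ((k:ℂ) + 1) + 1) / 2 = (r - (k:ℂ)) / 2 := by ring
        rw [harg]; ring
      have hQ1 : Q (k + 1) = (r - k - 1) / 2 * A := by
        rw [hQ (k+1), hA, hP k, ascPochhammer_succ_left, Polynomial.eval_mul,
          Polynomial.eval_X, Polynomial.eval_comp, Polynomial.eval_add,
          Polynomial.eval_X, Polynomial.eval_one]
        push_cast
        have harg : (r - ((k:ℂ) + 1)) / 2 + 1 = (r - (k:ℂ) + 1) / 2 := by ring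
        rw [harg]; ring
      -- ih in terms of N, D
      rw [hV k] at ih
      have hRk : (R k : ℂ) = Complex.I * (N / D) := ih
      have hD0 : D ≠ 0 := by
        intro h
        rw [h, div_zero, mul_zero] at hRk
        exact (hRpos k).ne' (by exact_mod_cast hRk)
      -- R k + ε k ≠ 0
      have hsum : R k + ε k ≠ 0 := by
        intro h
        have h2 := hRrec k
        rw [h, div_zero] at h2
        exact (hRpos (k+1)).ne' h2
      have hsumC : (R k : ℂ) + e ≠ 0 := by
        rw [he_def]
        intro h
        exact hsum (by exact_mod_cast h)
      have hY : Complex.I * N + e * D ≠ 0 := by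
        have h1 : Complex.I * N + e * D = ((R k : ℂ) + e) * D := by
          rw [hRk]; field_simp
        rw [h1]
        exact mul_ne_zero hsumC hD0
      -- the two key identities
      have hnum : (-1 : ℂ) ^ (k+1) * (P (k+1) - Q (k+1)) -
          Complex.I * ζ * (P (k+1) + Q (k+1)) =
          -((2*(k:ℂ)+1)/4) * (D - Complex.I * e * N) := by
        rw [hP1, hQ1, pow_succ, hr', hN, hD, hs_def]
        ring
      have hden : (-1 : ℂ) ^ (k+1) * (P (k+1) + Q (k+1)) -
          Complex.I * ζ * (P (k+1) - Q (k+1)) =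
          -Complex.I * ((2*(k:ℂ)+1)/4) * (Complex.I * N + e * D) := by
        rw [hP1, hQ1, pow_succ, hr', hN, hD, hs_def]
        linear_combination ((2*(k:ℂ)+1)/4) * (A * ((-1:ℂ)^k - Complex.I * ζ)
          - B * ((-1:ℂ)^k + Complex.I * ζ)) * Complex.I_sq
      -- assemble
      have hc : -Complex.I * ((2*(k:ℂ)+1)/4) ≠ 0 := by
        apply mul_ne_zero
        · simpa using Complex.I_ne_zero
        · exact div_ne_zero hmC (by norm_num)
      have hVk1 : V (k+1) = (D - Complex.I * e * N) / (Complex.I * N + e * D) := by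
        rw [hV (k+1), hnum, hden, ← mul_div_assoc,
          div_eq_div_iff (mul_ne_zero hc hY) hY]
        ring
      rw [hRrec k]
      push_cast
      rw [← he_def, hVk1, hRk,
        div_eq_div_iff (by rw [← hRk]; exact hsumC) hY]
      field_simp
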